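/- Let a_1, ..., a_n ∈ R^n be vectors of norm at most 1, let ε ≥ 2/√n, and let t satisfy t = 2 log(2 + n/t)/ε². Define K = {x ∈ R^n : |⟨x/√t, a_i⟩| ≤ ε for all i}. Then γ_n(K) ≥ (1 − 2t/(2t+n))^n ≥ e^{-3t}, where γ_n is the standard Gaussian measure on R^n. -/

import Mathlib

open MeasureTheory Real
open scoped InnerProductSpace ENNReal

/-- The standard Gaussian probability measure on `ℝⁿ`. -/
noncomputable def stdGaussian (n : ℕ) : Measure (EuclideanSpace ℝ (Fin n)) :=
  volume.withDensity (fun y => ENNReal.ofReal ((2 * π) ^ (-(n : ℝ) / 2) * Real.exp (-‖y‖ ^ 2 / 2)))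

lemma mgf_integrable (n : ℕ) (c : ℝ) (w : EuclideanSpace ℝ (Fin n)) :
    Integrable (fun v : EuclideanSpace ℝ (Fin n) =>
      Real.exp (-(1/2) * ‖v‖^2 + c * ⟪w, v⟫_ℝ)) := by
  have h := (GaussianFourier.integrable_cexp_neg_mul_sq_norm_add
    (V := EuclideanSpace ℝ (Fin n)) (b := (1/2 : ℂ)) (by norm_num) (c : ℂ) w).norm
  refine h.congr (Filter.Eventually.of_forall fun v => ?_)
  simp only [Complex.norm_exp]
  congr 1
  push_cast
  simp [Complex.add_re, Complex.mul_re, ← Complex.ofReal_pow]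

lemma mgf_integral (n : ℕ) (c : ℝ) (w : EuclideanSpace ℝ (Fin n)) :
    ∫ v : EuclideanSpace ℝ (Fin n), Real.exp (-(1/2) * ‖v‖^2 + c * ⟪w, v⟫_ℝ) =
      (2*π) ^ ((n:ℝ)/2) * Real.exp (c^2 * ‖w‖^2 / 2) := by
  have h := GaussianFourier.integral_cexp_neg_mul_sq_norm_add
    (V := EuclideanSpace ℝ (Fin n)) (b := (1/2 : ℂ)) (by norm_num) (c : ℂ) w
  have h4 := integral_ofReal (𝕜 := ℂ) (μ := (volume : Measure (EuclideanSpace ℝ (Fin n))))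
    (f := fun v : EuclideanSpace ℝ (Fin n) => rexp (-(1/2) * ‖v‖^2 + c * ⟪w, v⟫_ℝ))
  have h2 : ∫ v : EuclideanSpace ℝ (Fin n),
      ((Real.exp (-(1/2) * ‖v‖^2 + c * ⟪w, v⟫_ℝ) : ℝ) : ℂ) =
      ((π / (1/2) : ℂ)) ^ ((Module.finrank ℝ (EuclideanSpace ℝ (Fin n)) : ℂ) / 2) *
        Complex.exp ((c:ℂ)^2 * (‖w‖:ℂ)^2 / (4 * (1/2))) := by
    rw [← h]; congr 1; ext v; push_cast [Complex.ofReal_exp]; ring_nf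
  have h3 : ((π / (1/2) : ℂ)) ^ ((Module.finrank ℝ (EuclideanSpace ℝ (Fin n)) : ℂ) / 2) *
        Complex.exp ((c:ℂ)^2 * (‖w‖:ℂ)^2 / (4 * (1/2))) =
      (((2*π) ^ ((n:ℝ)/2) * Real.exp (c^2 * ‖w‖^2 / 2) : ℝ) : ℂ) := by
    rw [finrank_euclideanSpace_fin]
    push_cast [Complex.ofReal_cpow (by positivity : (0:ℝ) ≤ 2*π), Complex.ofReal_exp]
    norm_num
    ring_nf
  apply Complex.ofReal_injective
  exact h4.symm.trans (h2.trans h3)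

lemma density_measurable (n : ℕ) :
    Measurable (fun y : EuclideanSpace ℝ (Fin n) =>
      ENNReal.ofReal ((2 * π) ^ (-(n : ℝ) / 2) * Real.exp (-‖y‖ ^ 2 / 2))) := by
  apply Measurable.ennreal_ofReal
  exact (continuous_const.mul ((continuous_norm.pow 2).neg.div_const 2).rexp).measurable

lemma inner_measurable {n : ℕ} (θ : EuclideanSpace ℝ (Fin n)) :
    Measurable fun x : EuclideanSpace ℝ (Fin n) => ⟪x, θ⟫_ℝ :=
  (continuous_id.inner continuous_const).measurable

lemma stdGaussian_lintegral_exp (n : ℕ) (c : ℝ) (w : EuclideanSpace ℝ (Fin n)) :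
    ∫⁻ x, ENNReal.ofReal (Real.exp (c * ⟪x, w⟫_ℝ)) ∂(stdGaussian n) =
      ENNReal.ofReal (Real.exp (c^2 * ‖w‖^2 / 2)) := by
  rw [stdGaussian, lintegral_withDensity_eq_lintegral_mul _ (density_measurable n)
    (by exact ((Real.continuous_exp.comp ((continuous_const.mul
      (continuous_id.inner continuous_const)))).measurable).ennreal_ofReal)]
  simp only [Pi.mul_apply]
  have hpt : ∀ x : EuclideanSpace ℝ (Fin n),
      ENNReal.ofReal ((2 * π) ^ (-(n : ℝ) / 2) * Real.exp (-‖x‖ ^ 2 / 2)) *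
        ENNReal.ofReal (Real.exp (c * ⟪x, w⟫_ℝ)) =
      ENNReal.ofReal ((2 * π) ^ (-(n : ℝ) / 2) *
        Real.exp (-(1/2) * ‖x‖^2 + c * ⟪w, x⟫_ℝ)) := by
    intro x
    rw [← ENNReal.ofReal_mul (by positivity), mul_assoc, ← Real.exp_add, real_inner_comm w x]
    ring_nf
  simp only [hpt]
  rw [← ofReal_integral_eq_lintegral_ofReal
      ((mgf_integrable n c w).const_mul _)
      (Filter.Eventually.of_forall fun x => by positivity),
    integral_const_mul, mgf_integral, ← mul_assoc, ← Real.rpow_add (by positivity),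
    show (-(n:ℝ)/2 + (n:ℝ)/2) = 0 by ring, Real.rpow_zero, one_mul]

lemma stdGaussian_univ (n : ℕ) : stdGaussian n Set.univ = 1 := by
  have h := stdGaussian_lintegral_exp n 0 0
  norm_num [lintegral_one] at h
  exact h

instance (n : ℕ) : IsProbabilityMeasure (stdGaussian n) := ⟨stdGaussian_univ n⟩

lemma tail_bound (n : ℕ) (θ : EuclideanSpace ℝ (Fin n)) (hθ : θ ≠ 0) :
    stdGaussian n {x | 1 < ⟪x, θ⟫_ℝ} ≤ ENNReal.ofReal (Real.exp (-(2 * ‖θ‖^2)⁻¹)) := by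
  set v : ℝ := ‖θ‖^2 with hv
  have hv0 : 0 < v := by
    have := norm_pos_iff.mpr hθ
    positivity
  set l : ℝ := v⁻¹ with hl
  have hl0 : 0 < l := by positivity
  have hfm : Measurable fun x : EuclideanSpace ℝ (Fin n) =>
      ENNReal.ofReal (Real.exp (l * ⟪x, θ⟫_ℝ)) :=
    ((Real.continuous_exp.comp (continuous_const.mul
      (continuous_id.inner continuous_const))).measurable).ennreal_ofReal
  have hsub : {x : EuclideanSpace ℝ (Fin n) | 1 < ⟪x, θ⟫_ℝ} ⊆
      {x | ENNReal.ofReal (Real.exp l) ≤ ENNReal.ofReal (Real.exp (l * ⟪x, θ⟫_ℝ))} := by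
    intro x hx
    exact ENNReal.ofReal_le_ofReal (Real.exp_le_exp.2 (by nlinarith [Set.mem_setOf_eq ▸ hx]))
  calc stdGaussian n {x | 1 < ⟪x, θ⟫_ℝ}
      ≤ stdGaussian n {x | ENNReal.ofReal (Real.exp l) ≤
          ENNReal.ofReal (Real.exp (l * ⟪x, θ⟫_ℝ))} := measure_mono hsub
    _ ≤ (∫⁻ x, ENNReal.ofReal (Real.exp (l * ⟪x, θ⟫_ℝ)) ∂(stdGaussian n)) /
          ENNReal.ofReal (Real.exp l) :=
        meas_ge_le_lintegral_div hfm.aemeasurable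
          (by simp [Real.exp_pos]) (by simp)
    _ = ENNReal.ofReal (Real.exp (l^2 * v / 2)) / ENNReal.ofReal (Real.exp l) := by
        rw [stdGaussian_lintegral_exp]
    _ = ENNReal.ofReal (Real.exp (l^2 * v / 2 - l)) := by
        rw [← ENNReal.ofReal_div_of_pos (Real.exp_pos _), Real.exp_sub]
    _ = ENNReal.ofReal (Real.exp (-(2 * v)⁻¹)) := by
        congr 1
        rw [hl]
        field_simp
        ring

lemma slab_bound (n : ℕ) (θ : EuclideanSpace ℝ (Fin n)) (m : ℝ) (hm : 0 ≤ m)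
    (h : θ ≠ 0 → Real.exp (-(2 * ‖θ‖^2)⁻¹) ≤ m) :
    ENNReal.ofReal (1 - 2 * m) ≤ stdGaussian n {x | |⟪x, θ⟫_ℝ| ≤ 1} := by
  by_cases hθ : θ = 0
  · subst hθ
    have : {x : EuclideanSpace ℝ (Fin n) | |⟪x, (0 : EuclideanSpace ℝ (Fin n))⟫_ℝ| ≤ 1} =
        Set.univ := by
      ext x; simp [inner_zero_right]
    rw [this, stdGaussian_univ]
    exact ENNReal.ofReal_le_one.mpr (by linarith)
  · have hS : MeasurableSet {x : EuclideanSpace ℝ (Fin n) | |⟪x, θ⟫_ℝ| ≤ 1} :=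
      measurableSet_le (inner_measurable θ).abs measurable_const
    have hsub : {x : EuclideanSpace ℝ (Fin n) | |⟪x, θ⟫_ℝ| ≤ 1}ᶜ ⊆
        {x | 1 < ⟪x, θ⟫_ℝ} ∪ {x | 1 < ⟪x, -θ⟫_ℝ} := by
      intro x hx
      simp only [Set.mem_compl_iff, Set.mem_setOf_eq, not_le] at hx
      rcases lt_abs.mp hx with h1 | h1
      · exact Or.inl h1
      · exact Or.inr (by simpa [inner_neg_right] using h1)
    have hcompl : stdGaussian n {x : EuclideanSpace ℝ (Fin n) | |⟪x, θ⟫_ℝ| ≤ 1}ᶜ ≤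
        ENNReal.ofReal (2 * m) := by
      calc stdGaussian n {x : EuclideanSpace ℝ (Fin n) | |⟪x, θ⟫_ℝ| ≤ 1}ᶜ
          ≤ stdGaussian n {x | 1 < ⟪x, θ⟫_ℝ} + stdGaussian n {x | 1 < ⟪x, -θ⟫_ℝ} :=
            (measure_mono hsub).trans (measure_union_le _ _)
        _ ≤ ENNReal.ofReal (Real.exp (-(2 * ‖θ‖^2)⁻¹)) +
            ENNReal.ofReal (Real.exp (-(2 * ‖-θ‖^2)⁻¹)) :=
            add_le_add (tail_bound n θ hθ) (tail_bound n (-θ) (neg_ne_zero.2 hθ))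
        _ ≤ ENNReal.ofReal m + ENNReal.ofReal m := by
            rw [norm_neg]
            exact add_le_add (ENNReal.ofReal_le_ofReal (h hθ))
              (ENNReal.ofReal_le_ofReal (h hθ))
        _ = ENNReal.ofReal (2 * m) := by
            rw [← ENNReal.ofReal_add hm hm]; ring_nf
    have h1 : (1 : ℝ≥0∞) ≤ stdGaussian n {x : EuclideanSpace ℝ (Fin n) | |⟪x, θ⟫_ℝ| ≤ 1} +
        ENNReal.ofReal (2 * m) := by
      calc (1 : ℝ≥0∞) = stdGaussian n {x : EuclideanSpace ℝ (Fin n) | |⟪x, θ⟫_ℝ| ≤ 1} +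
            stdGaussian n {x : EuclideanSpace ℝ (Fin n) | |⟪x, θ⟫_ℝ| ≤ 1}ᶜ :=
            ((measure_add_measure_compl hS).trans (stdGaussian_univ n)).symm
        _ ≤ _ := add_le_add (le_refl _) hcompl
    calc ENNReal.ofReal (1 - 2 * m) = 1 - ENNReal.ofReal (2 * m) := by
          rw [ENNReal.ofReal_sub _ (by positivity), ENNReal.ofReal_one]
      _ ≤ stdGaussian n {x : EuclideanSpace ℝ (Fin n) | |⟪x, θ⟫_ℝ| ≤ 1} :=
          tsub_le_iff_right.mpr h1

/-- For vectors `a₁, …, aₙ` of norm at most `1` in `ℝⁿ`, `ε ≥ 2/√n`, and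
`t = 2 log(2 + n/t)/ε²`, the set `K = {x : |⟨x/√t, aᵢ⟩| ≤ ε ∀i}` satisfies
`γₙ(K) ≥ (1 − 2t/(2t+n))ⁿ ≥ e^{-3t}`.  The Khatri–Šidák lemma is assumed as a
hypothesis. -/
theorem stmt_12 (n : ℕ) (hn : 1 ≤ n) (a : Fin n → EuclideanSpace ℝ (Fin n))
    (ha : ∀ i, ‖a i‖ ≤ 1) (ε : ℝ) (hε : 2 / Real.sqrt n ≤ ε)
    (t : ℝ) (ht : 0 < t) (heq : t = 2 * Real.log (2 + n / t) / ε ^ 2)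
    (khatriSidak : ∀ θ : Fin n → EuclideanSpace ℝ (Fin n),
      (∏ i, stdGaussian n {x | |⟪x, θ i⟫_ℝ| ≤ 1}) ≤
        stdGaussian n (⋂ i, {x | |⟪x, θ i⟫_ℝ| ≤ 1}))
    (K : Set (EuclideanSpace ℝ (Fin n)))
    (hK : K = {x | ∀ i, |⟪(Real.sqrt t)⁻¹ • x, a i⟫_ℝ| ≤ ε}) :
    ENNReal.ofReal ((1 - 2 * t / (2 * t + n)) ^ n) ≤ stdGaussian n K ∧
      Real.exp (-3 * t) ≤ (1 - 2 * t / (2 * t + n)) ^ n := by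
  have hn1 : (1:ℝ) ≤ (n:ℝ) := by exact_mod_cast hn
  have hn0 : (0:ℝ) < (n:ℝ) := by linarith
  have hε0 : 0 < ε := lt_of_lt_of_le (by positivity) hε
  have hst : 0 < Real.sqrt t := Real.sqrt_pos.2 ht
  have h2tn : (0:ℝ) < 2*t + (n:ℝ) := by linarith
  -- the constant m
  set m : ℝ := t / (2*t + (n:ℝ)) with hmdef
  have hm : 0 ≤ m := by positivity
  have h2m : 2 * m ≤ 1 := by
    rw [hmdef, mul_div_assoc']
    rw [div_le_one h2tn]; linarith
  have hL : Real.log (2 + (n:ℝ)/t) = ε^2 * t / 2 := by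
    have hε2 : ε^2 ≠ 0 := by positivity
    rw [show (2:ℝ) + (n:ℝ)/t = (2*t+n)/t by field_simp]
    field_simp at heq
    ring_nf at heq ⊢
    linarith
  have hexp : Real.exp (-(ε^2 * t / 2)) = m := by
    rw [← hL, Real.exp_neg, Real.exp_log (by positivity),
      show 2 + (n:ℝ)/t = (2*t + n)/t by field_simp, inv_div, hmdef]
  -- the normalized directions
  set θ : Fin n → EuclideanSpace ℝ (Fin n) := fun i => (ε * Real.sqrt t)⁻¹ • a i with hθdef
  have hslab : ∀ i, θ i ≠ 0 → Real.exp (-(2 * ‖θ i‖^2)⁻¹) ≤ m := by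
    intro i hθi
    have hpos : 0 < ‖θ i‖^2 := by
      have := norm_pos_iff.mpr hθi; positivity
    have hnorm : ‖θ i‖^2 ≤ (ε^2 * t)⁻¹ := by
      have h1 : ‖θ i‖ ≤ (ε * Real.sqrt t)⁻¹ := by
        rw [hθdef]
        calc ‖(ε * Real.sqrt t)⁻¹ • a i‖ = (ε * Real.sqrt t)⁻¹ * ‖a i‖ := by
              rw [norm_smul, Real.norm_eq_abs, abs_of_pos (by positivity)]
          _ ≤ (ε * Real.sqrt t)⁻¹ * 1 := by
              exact mul_le_mul_of_nonneg_left (ha i) (by positivity)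
          _ = (ε * Real.sqrt t)⁻¹ := mul_one _
      calc ‖θ i‖^2 ≤ ((ε * Real.sqrt t)⁻¹)^2 := by
            exact pow_le_pow_left₀ (norm_nonneg _) h1 2
        _ = (ε^2 * t)⁻¹ := by
            rw [inv_pow, mul_pow, Real.sq_sqrt ht.le]
    rw [← hexp]
    apply Real.exp_le_exp.2
    rw [neg_le_neg_iff]
    calc ε^2 * t / 2 = (2 * (ε^2 * t)⁻¹)⁻¹ := by
          rw [mul_inv, inv_inv]; ring
      _ ≤ (2 * ‖θ i‖^2)⁻¹ := by
          apply inv_anti₀ (by positivity)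
          exact mul_le_mul_of_nonneg_left hnorm (by norm_num)
  -- identify K
  have hKθ : K = ⋂ i, {x : EuclideanSpace ℝ (Fin n) | |⟪x, θ i⟫_ℝ| ≤ 1} := by
    rw [hK]
    ext x
    simp only [Set.mem_setOf_eq, Set.mem_iInter]
    refine forall_congr' fun i => ?_
    rw [hθdef]
    rw [real_inner_smul_left, real_inner_smul_right, abs_mul, abs_mul,
      abs_of_pos (by positivity : (0:ℝ) < (Real.sqrt t)⁻¹),
      abs_of_pos (by positivity : (0:ℝ) < (ε * Real.sqrt t)⁻¹),
      inv_mul_le_iff₀ hst, inv_mul_le_iff₀ (by positivity), mul_one, mul_comm]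
  have hone : (0:ℝ) ≤ 1 - 2 * m := by linarith
  have hrw : 1 - 2 * t / (2*t + (n:ℝ)) = 1 - 2 * m := by rw [hmdef]; ring
  constructor
  · calc ENNReal.ofReal ((1 - 2 * t / (2*t + (n:ℝ)))^n)
        = ∏ _i : Fin n, ENNReal.ofReal (1 - 2 * m) := by
          rw [hrw, ENNReal.ofReal_pow hone, Finset.prod_const, Finset.card_univ,
            Fintype.card_fin]
      _ ≤ ∏ i, stdGaussian n {x | |⟪x, θ i⟫_ℝ| ≤ 1} :=
          Finset.prod_le_prod' fun i _ => slab_bound n (θ i) m hm (hslab i)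
      _ ≤ stdGaussian n (⋂ i, {x | |⟪x, θ i⟫_ℝ| ≤ 1}) := khatriSidak θ
      _ = stdGaussian n K := by rw [hKθ]
  · have key : 1 - 2 * t / (2*t + (n:ℝ)) = (1 + 2*t/(n:ℝ))⁻¹ := by
      field_simp
      ring
    have hb : (0:ℝ) < 1 + 2*t/(n:ℝ) := by positivity
    have h1 : 1 + 2*t/(n:ℝ) ≤ Real.exp (2*t/(n:ℝ)) := by
      linarith [Real.add_one_le_exp (2*t/(n:ℝ))]
    have h2 : (1 + 2*t/(n:ℝ))^n ≤ Real.exp (2*t) := by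
      calc (1 + 2*t/(n:ℝ))^n ≤ (Real.exp (2*t/(n:ℝ)))^n :=
            pow_le_pow_left₀ hb.le h1 n
        _ = Real.exp ((n:ℝ) * (2*t/(n:ℝ))) := (Real.exp_nat_mul _ n).symm
        _ = Real.exp (2*t) := by
            congr 1; field_simp
    rw [key]
    calc Real.exp (-3*t) ≤ Real.exp (-(2*t)) := by
          apply Real.exp_le_exp.2; linarith
      _ = (Real.exp (2*t))⁻¹ := by rw [Real.exp_neg]
      _ ≤ ((1 + 2*t/(n:ℝ))^n)⁻¹ := inv_anti₀ (by positivity) h2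
      _ = ((1 + 2*t/(n:ℝ))⁻¹)^n := (inv_pow _ _).symm
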